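/- Let m,n be positive integers, γ ∈ [0,1)^m, and suppose A ∈ [0,1)^{m×n} satisfies: for some κ > 1 and all sufficiently large T ∈ ℕ there exists q ∈ ℤ^n with 1 ≤ ‖q‖^n ≤ T and ⟨Aq − γ⟩^m < T^{−κ}. Then the series ∑_{t=1}^∞ t^{n-1} · (min_{1 ≤ ‖q‖ ≤ t} ⟨Aq − γ⟩^m) converges. -/

import Mathlib

open Filter

/-- The supremum norm of an integer vector, as a natural number. -/
def znn {n : ℕ} (q : Fin n → ℤ) : ℕ := Finset.univ.sup fun i => (q i).natAbs

/-- Supremum-norm distance of `y ∈ ℝ^m` to the integer lattice `ℤ^m`. -/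
noncomputable def dz {m : ℕ} (y : Fin m → ℝ) : ℝ := ⨅ p : Fin m → ℤ, ‖y - fun i => (p i : ℝ)‖

/-- `⟨Aq - γ⟩`, the approximation error. -/
noncomputable def approxErr {m n : ℕ} (A : Matrix (Fin m) (Fin n) ℝ) (γ : Fin m → ℝ)
    (q : Fin n → ℤ) : ℝ := dz (A.mulVec (fun i => (q i : ℝ)) - γ)

/-- `min_{q ∈ ℤ^n, l ≤ ‖q‖ ≤ t} ⟨Aq - γ⟩^m`. -/
noncomputable def minErr {m n : ℕ} (A : Matrix (Fin m) (Fin n) ℝ) (γ : Fin m → ℝ)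
    (l t : ℕ) : ℝ :=
  sInf {x | ∃ q : Fin n → ℤ, l ≤ znn q ∧ znn q ≤ t ∧ x = approxErr A γ q ^ m}

lemma approxErr_nonneg {m n : ℕ} (A : Matrix (Fin m) (Fin n) ℝ) (γ : Fin m → ℝ)
    (q : Fin n → ℤ) : 0 ≤ approxErr A γ q :=
  Real.iInf_nonneg fun _ => norm_nonneg _

lemma minErr_nonneg {m n : ℕ} (A : Matrix (Fin m) (Fin n) ℝ) (γ : Fin m → ℝ)
    (l t : ℕ) : 0 ≤ minErr A γ l t := by
  apply Real.sInf_nonneg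
  rintro x ⟨q, -, -, rfl⟩
  exact pow_nonneg (approxErr_nonneg A γ q) m

theorem dirichlet_implies_S_converges (m n : ℕ) (hm : 0 < m) (hn : 0 < n)
    (A : Matrix (Fin m) (Fin n) ℝ) (γ : Fin m → ℝ)
    (hA : ∀ i j, 0 ≤ A i j ∧ A i j < 1) (hγ : ∀ i, 0 ≤ γ i ∧ γ i < 1)
    (κ : ℝ) (hκ : 1 < κ)
    (hdir : ∃ T₀ : ℕ, ∀ T : ℕ, T₀ ≤ T → ∃ q : Fin n → ℤ,
      1 ≤ znn q ∧ (znn q : ℝ) ^ n ≤ (T : ℝ) ∧ approxErr A γ q ^ m < (T : ℝ) ^ (-κ)) :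
    Summable (fun t : ℕ => if 1 ≤ t then (t : ℝ) ^ (n - 1) * minErr A γ 1 t else 0) := by
  obtain ⟨T₀, hT⟩ := hdir
  -- the comparison series
  set p : ℝ := ((n - 1 : ℕ) : ℝ) - n * κ with hp
  have hplt : p < -1 := by
    have hcast : ((n - 1 : ℕ) : ℝ) = (n : ℝ) - 1 := by
      rw [Nat.cast_sub hn]; norm_num
    have h1 : (1 : ℝ) ≤ (n : ℝ) := by exact_mod_cast hn
    nlinarith [mul_le_mul_of_nonneg_left hκ.le (by positivity : (0:ℝ) ≤ (n:ℝ))]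
  have hg : Summable (fun t : ℕ => (t : ℝ) ^ p) := Real.summable_nat_rpow.mpr hplt
  -- key bound
  have key : ∀ t : ℕ, max T₀ 1 ≤ t → minErr A γ 1 t ≤ (t : ℝ) ^ (-((n : ℝ) * κ)) := by
    intro t ht
    have ht1 : 1 ≤ t := le_trans (le_max_right _ _) ht
    have htT0 : T₀ ≤ t ^ n :=
      le_trans (le_trans (le_max_left _ _) ht) (Nat.le_self_pow hn.ne' t)
    obtain ⟨q, hq1, hq2, hq3⟩ := hT (t ^ n) htT0
    have hqt : znn q ≤ t := by
      have h2 : ((znn q : ℝ)) ^ n ≤ ((t : ℝ)) ^ n := by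
        push_cast at hq2 ⊢; exact hq2
      have := (pow_le_pow_iff_left₀ (by positivity) (by positivity) hn.ne').mp h2
      exact_mod_cast this
    have hbdd : BddBelow {x | ∃ q : Fin n → ℤ, 1 ≤ znn q ∧ znn q ≤ t ∧
        x = approxErr A γ q ^ m} := by
      refine ⟨0, ?_⟩
      rintro x ⟨q', -, -, rfl⟩
      exact pow_nonneg (approxErr_nonneg A γ q') m
    have hle : minErr A γ 1 t ≤ approxErr A γ q ^ m :=
      csInf_le hbdd ⟨q, hq1, hqt, rfl⟩
    have hrw : ((t ^ n : ℕ) : ℝ) ^ (-κ) = (t : ℝ) ^ (-((n : ℝ) * κ)) := by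
      push_cast
      rw [← Real.rpow_natCast (t : ℝ) n, ← Real.rpow_mul (by positivity)]
      ring_nf
    calc minErr A γ 1 t ≤ approxErr A γ q ^ m := hle
      _ ≤ ((t ^ n : ℕ) : ℝ) ^ (-κ) := hq3.le
      _ = (t : ℝ) ^ (-((n : ℝ) * κ)) := hrw
  -- comparison
  apply summable_of_isBigO_nat hg
  rw [Asymptotics.isBigO_iff]
  refine ⟨1, ?_⟩
  filter_upwards [eventually_ge_atTop (max T₀ 1)] with t ht
  have ht1 : 1 ≤ t := le_trans (le_max_right _ _) ht
  have htpos : (0 : ℝ) < (t : ℝ) := by exact_mod_cast ht1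
  rw [if_pos ht1, one_mul]
  have h1 : ‖(t : ℝ) ^ (n - 1) * minErr A γ 1 t‖ = (t : ℝ) ^ (n - 1) * minErr A γ 1 t := by
    rw [Real.norm_eq_abs, abs_of_nonneg]
    exact mul_nonneg (by positivity) (minErr_nonneg A γ 1 t)
  have h2 : ‖(t : ℝ) ^ p‖ = (t : ℝ) ^ p := by
    rw [Real.norm_eq_abs, abs_of_nonneg (Real.rpow_nonneg htpos.le p)]
  rw [h1, h2]
  calc (t : ℝ) ^ (n - 1) * minErr A γ 1 t
      ≤ (t : ℝ) ^ (n - 1) * (t : ℝ) ^ (-((n : ℝ) * κ)) := by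
        exact mul_le_mul_of_nonneg_left (key t ht) (by positivity)
    _ = (t : ℝ) ^ p := by
        rw [← Real.rpow_natCast (t : ℝ) (n - 1), ← Real.rpow_add htpos]
        ring_nf
        rw [hp]
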